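/- Let x₁,…,x₆ be complex numbers with Σxᵢ = 0 and power sums s_j. Suppose s₂ = 3I₄, s₃ = (3/2)I₂I₄ − (9/2)I₆, s₅ = (15/8)I₂I₄² − (45/8)I₄I₆ + 1215 I₁₀, s₆ = (27/16)I₄³ + (3/8)I₂²I₄² − (9/4)I₂I₄I₆ + (27/8)I₆² + (729/4)I₂I₁₀ for complex numbers I₂, I₄, I₆, I₁₀. Then, provided 5s₂s₃ − 12s₅ ≠ 0: I₄ = s₂/3, I₁₀ = −s₂s₃/2916 + s₅/1215, I₂ = (5/3)(3s₂³ + 8s₃² − 48s₆)/(5s₂s₃ − 12s₅), and I₆ = (1/27)(15s₂⁴ + 10s₂s₃² − 240s₂s₆ + 72s₃s₅)/(5s₂s₃ − 12s₅). -/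
import Mathlib


/-- Inversion of the relations between the power sums of the
Satake roots and the Igusa invariants. -/
theorem igusa_from_power_sums (x : Fin 6 → ℂ) (s : ℕ → ℂ)
    (I2 I4 I6 I10 : ℂ)
    (hs : ∀ j, s j = ∑ i, x i ^ j)
    (h0 : ∑ i, x i = 0)
    (h2 : s 2 = 3 * I4)
    (h3 : s 3 = 3/2 * I2 * I4 - 9/2 * I6)
    (h5 : s 5 = 15/8 * I2 * I4^2 - 45/8 * I4 * I6 + 1215 * I10)
    (h6 : s 6 = 27/16 * I4^3 + 3/8 * I2^2 * I4^2 - 9/4 * I2 * I4 * I6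
                  + 27/8 * I6^2 + 729/4 * I2 * I10)
    (hden : 5 * s 2 * s 3 - 12 * s 5 ≠ 0) :
    I4 = s 2 / 3
    ∧ I10 = -(s 2 * s 3) / 2916 + s 5 / 1215
    ∧ I2 = 5/3 * (3 * (s 2)^3 + 8 * (s 3)^2 - 48 * s 6)
            / (5 * s 2 * s 3 - 12 * s 5)
    ∧ I6 = 1/27 * (15 * (s 2)^4 + 10 * s 2 * (s 3)^2 - 240 * s 2 * s 6
            + 72 * s 3 * s 5) / (5 * s 2 * s 3 - 12 * s 5) := by
  have hkey : 5 * s 2 * s 3 - 12 * s 5 = -14580 * I10 := by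
    rw [h2, h3, h5]; ring
  refine ⟨by rw [h2]; ring, by rw [h2, h3, h5]; ring, ?_, ?_⟩
  · rw [eq_div_iff hden]
    rw [h2, h3, h5, h6]; ring
  · rw [eq_div_iff hden]
    rw [h2, h3, h5, h6]; ring
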